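/- Let R be a commutative unital ring and I an ideal of R such that every R-module is I-reduced. Then for every R-module M and every i ≥ 0, the local cohomology module H_I^i(M) is isomorphic to Ext_R^i(R/I, M). -/

import Mathlib

/-!
STATEMENT 9: Let `R` be a commutative unital ring and `I` an ideal of `R` such that every
`R`-module is `I`-reduced. Then for every `R`-module `M` and every `i ≥ 0`, the local
cohomology module `H_I^i(M)` is isomorphic to `Ext_R^i(R/I, M)`.

`H_I^i` is Mathlib's `localCohomology I i` (the direct limit of `Ext^i(R/I^k, -)`),
and `Ext_R^i(R/I, M)` is Mathlib's `Ext R (ModuleCat R) i` applied to `R ⧸ I` and `M`.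
-/

universe u

open CategoryTheory Opposite

open CategoryTheory Opposite CategoryTheory.Limits

section Aux

variable {C : Type*} [Category C]

noncomputable def auxColimitIso (G : ℕ ⥤ C) [HasColimit G]
    (h : ∀ (k : ℕ) (hk : (1:ℕ) ≤ k), IsIso (G.map (homOfLE hk))) :
    colimit G ≅ G.obj 1 := by
  have key : ∀ (a b : ℕ) (h1 : 1 ≤ a) (hab : a ≤ b),
      inv (G.map (homOfLE h1)) =
        G.map (homOfLE hab) ≫ inv (G.map (homOfLE (h1.trans hab))) := by
    intro a b h1 hab
    have := h a h1; have := h b (h1.trans hab)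
    apply IsIso.inv_eq_of_hom_inv_id
    rw [← Category.assoc, ← G.map_comp, homOfLE_comp, IsIso.hom_inv_id]
  haveI inst : ∀ k : ℕ, IsIso (G.map (homOfLE (Nat.succ_le_succ (Nat.zero_le k)) : (1:ℕ) ⟶ k+1)) :=
    fun k => h _ _
  let c : Cocone G :=
    { pt := G.obj 1
      ι :=
      { app := fun k => G.map (homOfLE (Nat.le_succ k)) ≫
          inv (G.map (homOfLE (Nat.succ_le_succ (Nat.zero_le k)) : (1:ℕ) ⟶ k+1))
        naturality := by
          intro j k f
          have hjk : j ≤ k := leOfHom f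
          dsimp
          rw [Category.comp_id, key (j+1) (k+1) _ (Nat.succ_le_succ hjk),
            ← Category.assoc, ← Category.assoc, ← G.map_comp, ← G.map_comp]
          congr 1 } }
  have hc : IsColimit c :=
    { desc := fun s => s.ι.app 1
      fac := fun s k => by
        dsimp [c]
        have h1 : inv (G.map (homOfLE (Nat.succ_le_succ (Nat.zero_le k)) : (1:ℕ) ⟶ k+1)) ≫
            s.ι.app 1 = s.ι.app (k+1) := by
          rw [IsIso.inv_comp_eq]
          exact (s.w (homOfLE (Nat.succ_le_succ (Nat.zero_le k)))).symm
        rw [Category.assoc, h1]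
        exact s.w (homOfLE (Nat.le_succ k))
      uniq := fun s m hm => by
        have h1 := hm 1
        have h2 : c.ι.app 1 = 𝟙 _ := by
          dsimp [c]
          have : (homOfLE (Nat.le_succ 1) : (1:ℕ) ⟶ 2) =
              homOfLE (Nat.succ_le_succ (Nat.zero_le 1)) := Subsingleton.elim _ _
          rw [this, IsIso.hom_inv_id]
        rw [h2, Category.id_comp] at h1
        exact h1 }
  exact colimit.isoColimitCocone ⟨c, hc⟩

end Aux

lemma mapQ_isIso {R : Type u} [CommRing R] (a b : Ideal R) (hab : a ≤ b) (hba : b ≤ a) :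
    IsIso (show ModuleCat.of R (R ⧸ a) ⟶ ModuleCat.of R (R ⧸ b) from
      ModuleCat.ofHom (Submodule.mapQ a b LinearMap.id hab)) := by
  refine ⟨ModuleCat.ofHom (Submodule.mapQ b a LinearMap.id hba), ?_, ?_⟩ <;>
    · ext1; apply Submodule.linearMap_qext; rfl

open CategoryTheory.Limits localCohomology in
theorem stmt9 (R : Type u) [CommRing R] (I : Ideal R)
    (hred : ∀ (N : Type u) [AddCommGroup N] [Module R N],
      ∀ m : N, (∀ r ∈ I ^ 2, r • m = 0) → ∀ r ∈ I, r • m = 0)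
    (M : Type u) [AddCommGroup M] [Module R M] (i : ℕ) :
    Nonempty ((localCohomology I i).obj (ModuleCat.of R M) ≅
      ((Ext R (ModuleCat.{u} R) i).obj (op (ModuleCat.of R (R ⧸ I)))).obj
        (ModuleCat.of R M)) := by
  have hII : I ^ 2 = I := by
    refine le_antisymm (Ideal.pow_le_self two_ne_zero) ?_
    intro r hr
    have key := hred (R ⧸ I ^ 2) (Submodule.Quotient.mk 1)
      (fun s hs => by
        rw [← Submodule.Quotient.mk_smul, smul_eq_mul, mul_one, Submodule.Quotient.mk_eq_zero]
        exact hs)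
      r hr
    rwa [← Submodule.Quotient.mk_smul, smul_eq_mul, mul_one,
      Submodule.Quotient.mk_eq_zero] at key
  have hpow : ∀ k : ℕ, 1 ≤ k → I ^ k = I := by
    intro k hk
    induction k with
    | zero => omega
    | succ n ih =>
      rcases Nat.eq_or_lt_of_le hk with h | h
      · rw [← h, pow_one]
      · rw [pow_succ, ih (by omega), ← pow_two, hII]
  haveI hcd : HasColimit (diagram (idealPowersDiagram I) i) :=
    hasColimitDiagram (idealPowersDiagram I) i
  let F : ℕᵒᵖᵒᵖ ⥤ ModuleCat.{u} R :=
    diagram (idealPowersDiagram I) i ⋙ (evaluation _ _).obj (ModuleCat.of R M)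
  let e := opOpEquivalence ℕ
  let G : ℕ ⥤ ModuleCat.{u} R := e.inverse ⋙ F
  have hiso : ∀ (k : ℕ) (hk : (1:ℕ) ≤ k), IsIso (G.map (homOfLE hk)) := by
    intro k hk
    haveI hmod : IsIso ((ringModIdeals (idealPowersDiagram I)).map
        ((homOfLE hk).op : (op k : ℕᵒᵖ) ⟶ op 1)) :=
      mapQ_isIso (I ^ k) (I ^ 1) (Ideal.pow_le_pow_right hk)
        (le_of_eq (by rw [pow_one, hpow k hk]))
    show IsIso (((Ext R (ModuleCat.{u} R) i).map
      (((ringModIdeals (idealPowersDiagram I)).map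
        ((homOfLE hk).op : (op k : ℕᵒᵖ) ⟶ op 1)).op)).app (ModuleCat.of R M))
    infer_instance
  have iso1 : (localCohomology I i).obj (ModuleCat.of R M) ≅ colimit F :=
    colimitObjIsoColimitCompEvaluation _ _
  have iso2 : colimit F ≅ colimit G := (Functor.Final.colimitIso e.inverse F).symm
  have iso3 : colimit G ≅ G.obj 1 := auxColimitIso G hiso
  let q : ModuleCat.of R (R ⧸ I ^ (1:ℕ)) ≅ ModuleCat.of R (R ⧸ I) :=
    (Submodule.quotEquivOfEq _ _ (pow_one I)).toModuleIso
  have iso4 : G.obj 1 ≅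
      ((Ext R (ModuleCat.{u} R) i).obj (op (ModuleCat.of R (R ⧸ I)))).obj (ModuleCat.of R M) :=
    ((Ext R (ModuleCat.{u} R) i).mapIso q.symm.op).app (ModuleCat.of R M)
  exact ⟨iso1 ≪≫ iso2 ≪≫ iso3 ≪≫ iso4⟩
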